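/- If x, y ∈ ℝⁿ (n ≥ 3) and |x−y| = (√(2+2/n))^k · (2/n)^l for some non-negative integers k, l, then there exists a finite set S ⊆ ℝⁿ containing x and y such that every map f: S → ℂⁿ preserving unit distance also satisfies φₙ(f(x),f(y)) = |x−y|². -/

import Mathlib

noncomputable def phi (n : ℕ) (x y : Fin n → ℂ) : ℂ := ∑ i, (x i - y i) ^ 2

/-- `f` preserves unit distance on the set `S`. -/
def UnitPreservingOn (n : ℕ) (S : Set (EuclideanSpace ℝ (Fin n)))
    (f : EuclideanSpace ℝ (Fin n) → (Fin n → ℂ)) : Prop :=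
  ∀ a ∈ S, ∀ b ∈ S, dist a b = 1 → phi n (f a) (f b) = 1

/-- `d ∈ Dₙ`: `d > 0` and for all `x y` at distance `d` there is a finite set `S`
containing `x` and `y` such that every unit-distance preserving map `f : S → ℂⁿ`
satisfies `φₙ(f x, f y) = d²`. -/
def MemD (n : ℕ) (d : ℝ) : Prop :=
  0 < d ∧ ∀ x y : EuclideanSpace ℝ (Fin n), dist x y = d →
    ∃ S : Finset (EuclideanSpace ℝ (Fin n)), x ∈ S ∧ y ∈ S ∧
      ∀ f : EuclideanSpace ℝ (Fin n) → (Fin n → ℂ),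
        UnitPreservingOn n (↑S) f → phi n (f x) (f y) = (d : ℂ) ^ 2




open Matrix Finset

namespace Tysz

lemma phi_expand (n : ℕ) (x y : Fin n → ℂ) :
    phi n x y = x ⬝ᵥ x - 2 * (x ⬝ᵥ y) + y ⬝ᵥ y := by
  simp only [phi, dotProduct]
  rw [Finset.mul_sum, ← Finset.sum_sub_distrib, ← Finset.sum_add_distrib]
  exact Finset.sum_congr rfl fun i _ => by ring

lemma dot_zero_of_forall {n : ℕ} (u : Fin n → ℂ) (h : ∀ z, u ⬝ᵥ z = 0) : u = 0 := by
  funext j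
  simpa using h (Pi.single j 1)

lemma dot_sum_left {n : ℕ} {ι : Type*} [Fintype ι] (F : ι → (Fin n → ℂ)) (w : Fin n → ℂ) :
    (∑ i, F i) ⬝ᵥ w = ∑ i, F i ⬝ᵥ w := by
  simp only [dotProduct, Finset.sum_apply, Finset.sum_mul]
  exact Finset.sum_comm

lemma coeff_zero {m : ℕ} {S2 : ℂ} (hS : S2 ≠ 0) (c : Fin m → ℂ)
    (h : ∀ j, (∑ i, c i) * (S2/2) + c j * (S2/2) = 0) : ∀ j, c j = 0 := by
  have key : ∀ j, c j = -∑ i, c i := by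
    intro j
    have h3 : ((∑ i, c i) + c j) * (S2/2) = 0 := by linear_combination h j
    have h4 : (∑ i, c i) + c j = 0 :=
      (mul_eq_zero.1 h3).resolve_right (by simpa using hS)
    exact eq_neg_of_add_eq_zero_right h4
  have hsum : (∑ i, c i) = 0 := by
    have h5 : (∑ j, c j) = ∑ _j : Fin m, (-∑ i, c i) := Finset.sum_congr rfl fun j _ => key j
    rw [Finset.sum_const, Finset.card_univ, Fintype.card_fin] at h5
    have h6 : (1 + (m:ℂ)) * (∑ i, c i) = 0 := by
      rw [nsmul_eq_mul] at h5
      linear_combination h5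
    exact (mul_eq_zero.1 h6).resolve_left (by
      have : ((1 + m : ℕ) : ℂ) ≠ 0 := Nat.cast_ne_zero.2 (by omega)
      simpa using this)
  intro j; rw [key j, hsum, neg_zero]

/-- Key structural lemma: images of the vertices of a regular simplex under a
`phi`-preserving situation.  `C` is the centroid. -/
lemma simplex_key {n : ℕ} (hn : 3 ≤ n) {s : ℝ} (hs : s ≠ 0)
    (P : Fin n → (Fin n → ℂ))
    (hP : ∀ k l, k ≠ l → phi n (P k) (P l) = ((s:ℂ))^2) :
    ∃ C : Fin n → ℂ,
      (∀ (Z : Fin n → ℂ) (r : ℂ), (∀ k, phi n Z (P k) = r) →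
        (∀ k l, (Z - C) ⬝ᵥ (P k - P l) = 0) ∧
        ((Z - C) ⬝ᵥ (Z - C) = r - ((n:ℂ)-1) * ((s:ℂ))^2 / (2*(n:ℂ)))) ∧
      (∀ w w' : Fin n → ℂ, (∀ k l, w ⬝ᵥ (P k - P l) = 0) →
        (∀ k l, w' ⬝ᵥ (P k - P l) = 0) → w' ≠ 0 →
        (w' ⬝ᵥ w') • w = (w ⬝ᵥ w') • w') := by
  have hn0 : (n:ℂ) ≠ 0 := Nat.cast_ne_zero.2 (by omega)
  have hz0 : 0 < n := by omega
  let z0 : Fin n := ⟨0, hz0⟩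
  have hsC : ((s:ℂ))^2 ≠ 0 := pow_ne_zero _ (by exact_mod_cast Complex.ofReal_ne_zero.2 hs)
  set N : Fin n → ℂ := fun k => P k ⬝ᵥ P k with hN
  have hM : ∀ k l, k ≠ l → P k ⬝ᵥ P l = (N k + N l - (s:ℂ)^2)/2 := by
    intro k l hkl
    have h1 := hP k l hkl
    rw [phi_expand] at h1
    field_simp
    linear_combination -h1
  have hMcomm : ∀ k l, P k ⬝ᵥ P l = P l ⬝ᵥ P k := fun k l => dotProduct_comm _ _
  set SN : ℂ := ∑ k, N k with hSN
  have hrow : ∀ k, (∑ m, P m ⬝ᵥ P k) = (SN + (n:ℂ) * N k - ((n:ℂ)-1)*(s:ℂ)^2)/2 := by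
    intro k
    rw [← Finset.sum_erase_add _ _ (Finset.mem_univ k)]
    have h1 : ∑ m ∈ Finset.univ.erase k, P m ⬝ᵥ P k
        = ∑ m ∈ Finset.univ.erase k, (N m + N k - (s:ℂ)^2)/2 :=
      Finset.sum_congr rfl fun m hm => hM m k (Finset.ne_of_mem_erase hm)
    rw [h1]
    have h2 : ∑ m ∈ Finset.univ.erase k, (N m + N k - (s:ℂ)^2)/2
        = ((∑ m ∈ Finset.univ.erase k, N m) + ((n:ℂ)-1) * (N k - (s:ℂ)^2))/2 := by
      rw [← Finset.sum_div, Finset.sum_sub_distrib, Finset.sum_add_distrib,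
        Finset.sum_const, Finset.sum_const, Finset.card_erase_of_mem (Finset.mem_univ k),
        Finset.card_univ, Fintype.card_fin]
      have hcast : ((n - 1 : ℕ) : ℂ) = (n:ℂ) - 1 := by
        have : (1:ℕ) ≤ n := by omega
        push_cast [Nat.cast_sub this]
        ring
      rw [nsmul_eq_mul, nsmul_eq_mul, hcast]
      ring
    rw [h2, Finset.sum_erase_eq_sub (Finset.mem_univ k), ← hSN]
    ring
  set C : Fin n → ℂ := ((n:ℂ))⁻¹ • ∑ m, P m with hC
  have hCdot : ∀ z : Fin n → ℂ, C ⬝ᵥ z = ((n:ℂ))⁻¹ * ∑ m, P m ⬝ᵥ z := by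
    intro z
    rw [hC, smul_dotProduct, dot_sum_left]
    simp [smul_eq_mul]
  have hCP : ∀ k, C ⬝ᵥ P k = ((n:ℂ))⁻¹ * ((SN + (n:ℂ) * N k - ((n:ℂ)-1)*(s:ℂ)^2)/2) := by
    intro k; rw [hCdot, hrow]
  have hCC : C ⬝ᵥ C = (2*SN - ((n:ℂ)-1)*(s:ℂ)^2)/(2*(n:ℂ)) := by
    rw [hCdot]
    have h1 : ∀ m, P m ⬝ᵥ C = ((n:ℂ))⁻¹ * ((SN + (n:ℂ) * N m - ((n:ℂ)-1)*(s:ℂ)^2)/2) := by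
      intro m
      rw [dotProduct_comm]
      exact hCP m
    have h2 : (∑ m, P m ⬝ᵥ C) = ∑ m, ((n:ℂ))⁻¹ * ((SN + (n:ℂ) * N m - ((n:ℂ)-1)*(s:ℂ)^2)/2) :=
      Finset.sum_congr rfl fun m _ => h1 m
    rw [h2, ← Finset.mul_sum]
    have h3 : ∑ m, ((SN + (n:ℂ) * N m - ((n:ℂ)-1)*(s:ℂ)^2)/2)
        = ((n:ℂ)*SN + (n:ℂ)*SN - (n:ℂ)*((n:ℂ)-1)*(s:ℂ)^2)/2 := by
      rw [← Finset.sum_div, Finset.sum_sub_distrib, Finset.sum_add_distrib,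
        Finset.sum_const, Finset.sum_const, Finset.card_univ, Fintype.card_fin,
        ← Finset.mul_sum, ← hSN, nsmul_eq_mul, nsmul_eq_mul]
      ring
    rw [h3]
    field_simp
    ring
  refine ⟨C, ?_, ?_⟩
  · -- part A
    intro Z r hZ
    have hZP : ∀ k, Z ⬝ᵥ P k = (Z ⬝ᵥ Z + N k - r)/2 := by
      intro k
      have h1 := hZ k
      rw [phi_expand] at h1
      field_simp
      linear_combination -h1
    constructor
    · intro k l
      rw [sub_dotProduct, dotProduct_sub, dotProduct_sub, hZP, hZP]
      have h4 : C ⬝ᵥ P k - C ⬝ᵥ P l = (N k - N l)/2 := by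
        rw [hCP, hCP]
        field_simp
        ring
      linear_combination -h4
    · have hZC : Z ⬝ᵥ C = ((n:ℂ))⁻¹ * (((n:ℂ) * (Z ⬝ᵥ Z) + SN - (n:ℂ)*r)/2) := by
        rw [dotProduct_comm, hCdot]
        have h1 : (∑ m, P m ⬝ᵥ Z) = ∑ m, ((Z ⬝ᵥ Z + N m - r)/2) :=
          Finset.sum_congr rfl fun m _ => by rw [dotProduct_comm, hZP]
        rw [h1, ← Finset.sum_div, Finset.sum_sub_distrib, Finset.sum_add_distrib,
          Finset.sum_const, Finset.sum_const, Finset.card_univ, Fintype.card_fin,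
          nsmul_eq_mul, nsmul_eq_mul, ← hSN]
      have hCZ : C ⬝ᵥ Z = Z ⬝ᵥ C := dotProduct_comm _ _
      rw [sub_dotProduct, dotProduct_sub, dotProduct_sub, hZC, hCZ, hZC, hCC]
      field_simp
      ring
  · -- part B
    intro w w' hw hw' hw'ne
    have hemb : ∀ i : Fin (n-1), (⟨i.1+1, by have := i.isLt; omega⟩ : Fin n) ≠ z0 := by
      intro i
      exact Fin.ne_of_val_ne (Nat.succ_ne_zero i.1)
    set v : Fin (n-1) → (Fin n → ℂ) :=
      fun i => P ⟨i.1+1, by have := i.isLt; omega⟩ - P z0 with hv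
    have hvv : ∀ i j, v i ⬝ᵥ v j = (s:ℂ)^2/2 + (if i = j then (s:ℂ)^2/2 else 0) := by
      intro i j
      rw [hv]
      simp only
      rw [sub_dotProduct, dotProduct_sub, dotProduct_sub]
      by_cases hij : i = j
      · subst hij
        rw [if_pos rfl]
        rw [hM _ z0 (hemb i), hM z0 _ (Ne.symm (hemb i))]
        ring
      · have hab : (⟨i.1+1, by have := i.isLt; omega⟩ : Fin n) ≠ ⟨j.1+1, by have := j.isLt; omega⟩ := by
          intro hc
          apply hij
          have hval := congrArg Fin.val hc
          simp only at hval
          exact Fin.ext (by omega)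
        rw [if_neg hij, hM _ _ hab, hM _ z0 (hemb i), hM z0 _ (Ne.symm (hemb j))]
        ring
    have hwv : ∀ i, w ⬝ᵥ v i = 0 := fun i => hw _ z0
    have hw'v : ∀ i, w' ⬝ᵥ v i = 0 := fun i => hw' _ z0
    set fam : (Fin (n-1)) ⊕ Unit → (Fin n → ℂ) := Sum.elim v (fun _ => w') with hfam
    have hvdotsum : ∀ (g : Fin (n-1) → ℂ) (j : Fin (n-1)),
        (∑ i, g i • v i) ⬝ᵥ v j = (∑ i, g i) * ((s:ℂ)^2/2) + g j * ((s:ℂ)^2/2) := by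
      intro g j
      rw [dot_sum_left]
      have h1 : ∀ i, (g i • v i) ⬝ᵥ v j = g i * ((s:ℂ)^2/2) + (if i = j then g i * ((s:ℂ)^2/2) else 0) := by
        intro i
        rw [smul_dotProduct, hvv, smul_eq_mul]
        by_cases hij : i = j
        · rw [if_pos hij, if_pos hij]; ring
        · rw [if_neg hij, if_neg hij]; ring
      rw [Finset.sum_congr rfl fun i _ => h1 i, Finset.sum_add_distrib,
        Finset.sum_ite_eq' Finset.univ j, if_pos (Finset.mem_univ j), ← Finset.sum_mul]
    have hlin : LinearIndependent ℂ fam := by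
      rw [Fintype.linearIndependent_iff]
      intro g hg
      rw [Fintype.sum_sum_type] at hg
      have hgU : (∑ i : Fin (n-1), g (Sum.inl i) • v i) + g (Sum.inr ()) • w' = 0 := by
        simpa [hfam] using hg
      have hgl : ∀ i, g (Sum.inl i) = 0 := by
        apply coeff_zero hsC
        intro j
        have h2 := congrArg (fun z => z ⬝ᵥ v j) hgU
        simp only [add_dotProduct, zero_dotProduct, smul_dotProduct, hw'v,
          smul_eq_mul, mul_zero, add_zero] at h2
        rw [hvdotsum] at h2
        exact h2
      have hgr : g (Sum.inr ()) = 0 := by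
        have h3 : g (Sum.inr ()) • w' = 0 := by
          have : (∑ i : Fin (n-1), g (Sum.inl i) • v i) = 0 := by
            refine Finset.sum_eq_zero fun i _ => ?_
            rw [hgl i, zero_smul]
          rw [this, zero_add] at hgU
          exact hgU
        rcases smul_eq_zero.1 h3 with h | h
        · exact h
        · exact absurd h hw'ne
      rintro (i | ⟨⟩)
      · exact hgl i
      · exact hgr
    have hcard : Fintype.card ((Fin (n-1)) ⊕ Unit) = Module.finrank ℂ (Fin n → ℂ) := by
      rw [Module.finrank_fintype_fun_eq_card, Fintype.card_fin, Fintype.card_sum,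
        Fintype.card_fin, Fintype.card_unit]
      omega
    let b := basisOfLinearIndependentOfCardEqFinrank hlin hcard
    have hspan : Submodule.span ℂ (Set.range fam) = ⊤ := by
      have := Module.Basis.span_eq b
      rwa [coe_basisOfLinearIndependentOfCardEqFinrank] at this
    set u : Fin n → ℂ := (w' ⬝ᵥ w') • w - (w ⬝ᵥ w') • w' with hu
    have hufam : ∀ i, u ⬝ᵥ fam i = 0 := by
      rintro (i | ⟨⟩)
      · simp only [hfam, Sum.elim_inl, hu, sub_dotProduct, smul_dotProduct, hwv i, hw'v i,
          smul_eq_mul, mul_zero, sub_zero]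
      · simp only [hfam, Sum.elim_inr, hu, sub_dotProduct, smul_dotProduct, smul_eq_mul]
        rw [dotProduct_comm w w']
        ring
    have hall : ∀ z, u ⬝ᵥ z = 0 := by
      intro z
      have hz : z ∈ Submodule.span ℂ (Set.range fam) := by rw [hspan]; exact Submodule.mem_top
      induction hz using Submodule.span_induction with
      | mem x hx => obtain ⟨i, rfl⟩ := hx; exact hufam i
      | zero => simp
      | add a b _ _ ha hb => rw [dotProduct_add, ha, hb, add_zero]
      | smul c a _ ha => rw [dotProduct_smul, ha, smul_zero]
    have hu0 : u = 0 := dot_zero_of_forall u hall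
    have := sub_eq_zero.1 (hu ▸ hu0)
    exact this

end Tysz

open Finset

namespace Tysz2

lemma fin_cond {n : ℕ} (i : ℕ) (h : i < n) (j : Fin n) : (j.1 = i) = (j = (⟨i,h⟩ : Fin n)) :=
  propext ⟨fun hv => Fin.ext hv, fun he => by rw [he]⟩

lemma sum_ite_one' {n : ℕ} (i0 : ℕ) (h : i0 < n) (A C : ℝ) :
    ∑ j : Fin n, (if j.1 = i0 then A else C) = A + ((n:ℝ)-1)*C := by
  simp only [fin_cond i0 h]
  have h1 : ∀ j : Fin n, (if j = (⟨i0,h⟩:Fin n) then A else C)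
      = C + (if j = (⟨i0,h⟩:Fin n) then A - C else 0) := by
    intro j; split_ifs <;> ring
  rw [Finset.sum_congr rfl fun j _ => h1 j, Finset.sum_add_distrib, Finset.sum_const,
    Finset.sum_ite_eq' Finset.univ, if_pos (Finset.mem_univ _), Finset.card_univ,
    Fintype.card_fin, nsmul_eq_mul]
  ring

lemma sum_ite_two' {n : ℕ} (i0 i1 : ℕ) (h0 : i0 < n) (h1 : i1 < n) (hne : i0 ≠ i1)
    (A B C : ℝ) :
    ∑ j : Fin n, (if j.1 = i0 then A else if j.1 = i1 then B else C)
      = A + B + ((n:ℝ)-2)*C := by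
  simp only [fin_cond i0 h0, fin_cond i1 h1]
  have hf : ∀ j : Fin n, (if j = (⟨i0,h0⟩:Fin n) then A else if j = (⟨i1,h1⟩:Fin n) then B else C)
      = C + (if j = (⟨i0,h0⟩:Fin n) then A - C else 0) + (if j = (⟨i1,h1⟩:Fin n) then B - C else 0) := by
    intro j
    split_ifs <;> first | ring1 | (exfalso; simp_all [Fin.ext_iff])
  rw [Finset.sum_congr rfl fun j _ => hf j, Finset.sum_add_distrib, Finset.sum_add_distrib,
    Finset.sum_const, Finset.sum_ite_eq' Finset.univ, Finset.sum_ite_eq' Finset.univ,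
    if_pos (Finset.mem_univ _), if_pos (Finset.mem_univ _), Finset.card_univ,
    Fintype.card_fin, nsmul_eq_mul]
  ring

lemma sum_ite_three' {n : ℕ} (i0 i1 i2 : ℕ) (h0 : i0 < n) (h1 : i1 < n) (h2 : i2 < n)
    (h01 : i0 ≠ i1) (h02 : i0 ≠ i2) (h12 : i1 ≠ i2) (A B C D : ℝ) :
    ∑ j : Fin n, (if j.1 = i0 then A else if j.1 = i1 then B else if j.1 = i2 then C else D)
      = A + B + C + ((n:ℝ)-3)*D := by
  simp only [fin_cond i0 h0, fin_cond i1 h1, fin_cond i2 h2]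
  have hf : ∀ j : Fin n,
      (if j = (⟨i0,h0⟩:Fin n) then A else if j = (⟨i1,h1⟩:Fin n) then B
        else if j = (⟨i2,h2⟩:Fin n) then C else D)
      = D + (if j = (⟨i0,h0⟩:Fin n) then A - D else 0) + (if j = (⟨i1,h1⟩:Fin n) then B - D else 0)
        + (if j = (⟨i2,h2⟩:Fin n) then C - D else 0) := by
    intro j
    split_ifs <;> first | ring1 | (exfalso; simp_all [Fin.ext_iff])
  rw [Finset.sum_congr rfl fun j _ => hf j, Finset.sum_add_distrib, Finset.sum_add_distrib,
    Finset.sum_add_distrib, Finset.sum_const,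
    Finset.sum_ite_eq' Finset.univ, Finset.sum_ite_eq' Finset.univ, Finset.sum_ite_eq' Finset.univ,
    if_pos (Finset.mem_univ _), if_pos (Finset.mem_univ _), if_pos (Finset.mem_univ _),
    Finset.card_univ, Fintype.card_fin, nsmul_eq_mul]
  ring

/-- `vertb n s` : common coordinate offset. -/
noncomputable def vertb (n : ℕ) (s : ℝ) : ℝ :=
  -(s / Real.sqrt 2) * (Real.sqrt n - 1) / (((n:ℝ) - 1) * Real.sqrt n)

/-- vertices of a regular `(n-1)`-simplex of side `s` in the hyperplane `{x | x 0 = 0}`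
of `ℝ^n`, centred at the origin (as coordinate functions). -/
noncomputable def vert (n : ℕ) (s : ℝ) : Fin n → Fin n → ℝ := fun k j =>
  if j.1 = 0 then 0
  else if k.1 = 0 then -(s / Real.sqrt 2) / Real.sqrt n
  else if j.1 = k.1 then s / Real.sqrt 2 + vertb n s else vertb n s

section VertProps

variable {n : ℕ}

lemma sqrt_n_prop (hn : 3 ≤ n) :
    (Real.sqrt n)^2 = (n:ℝ) ∧ 1 < Real.sqrt n := by
  have hN3 : (3:ℝ) ≤ (n:ℝ) := by exact_mod_cast hn
  have h1 : (Real.sqrt n)^2 = (n:ℝ) := Real.sq_sqrt (by linarith)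
  refine ⟨h1, ?_⟩
  nlinarith [Real.sqrt_nonneg (n:ℝ)]

lemma haa (s : ℝ) : (s / Real.sqrt 2)^2 = s^2/2 := by
  rw [div_pow, Real.sq_sqrt (by norm_num : (0:ℝ) ≤ 2)]

lemma vert_norm (hn : 3 ≤ n) (s : ℝ) (k : Fin n) :
    ∑ j, (vert n s k j)^2 = s^2*((n:ℝ)-1)/(2*(n:ℝ)) := by
  obtain ⟨hσ2, hσgt⟩ := sqrt_n_prop hn
  set σ := Real.sqrt n with hσ
  set aa := s / Real.sqrt 2 with haadef
  have hσ0 : σ ≠ 0 := by nlinarith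
  have hσ1 : σ^2 - 1 ≠ 0 := by nlinarith
  have hn0 : 0 < n := by omega
  by_cases hk : k.1 = 0
  · have hf : ∀ j : Fin n, (vert n s k j)^2
        = (if j.1 = 0 then (0:ℝ) else (-aa/σ)^2) := by
      intro j
      simp only [vert, hk, reduceIte, ← haadef, ← hσ]
      split_ifs <;> first | ring1 | omega
    rw [Finset.sum_congr rfl fun j _ => hf j, sum_ite_one' 0 hn0, ← hσ2]
    have h3 := haa s
    rw [← haadef] at h3
    calc 0 + (σ^2-1)*(-aa/σ)^2 = aa^2 * ((σ^2-1)/σ^2) := by ring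
      _ = s^2*(σ^2-1)/(2*σ^2) := by rw [h3]; ring
  · have hf : ∀ j : Fin n, (vert n s k j)^2
        = (if j.1 = 0 then (0:ℝ) else if j.1 = k.1 then (aa + vertb n s)^2 else (vertb n s)^2) := by
      intro j
      simp only [vert, hk, reduceIte, ← haadef, ← hσ]
      split_ifs <;> first | ring1 | omega
    rw [Finset.sum_congr rfl fun j _ => hf j, sum_ite_two' 0 k.1 hn0 k.isLt (fun hc => hk hc.symm)]
    have hb : vertb n s = -aa*(σ-1)/((σ^2-1)*σ) := by
      rw [vertb, ← haadef, ← hσ, hσ2]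
    rw [hb, ← hσ2]
    have h2 : (aa + -aa*(σ-1)/((σ^2-1)*σ))^2 + (σ^2-2)*(-aa*(σ-1)/((σ^2-1)*σ))^2
        = aa^2 * ((σ^2-1)/σ^2) := by
      field_simp
      ring
    have h3 := haa s
    rw [← haadef] at h3
    calc 0 + (aa + -aa*(σ-1)/((σ^2-1)*σ))^2 + (σ^2-2)*(-aa*(σ-1)/((σ^2-1)*σ))^2
        = aa^2 * ((σ^2-1)/σ^2) := by rw [← h2]; ring
      _ = s^2*(σ^2-1)/(2*σ^2) := by rw [h3]; ring

lemma vert_dist (hn : 3 ≤ n) (s : ℝ) (k l : Fin n) (hkl : k ≠ l) :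
    ∑ j, (vert n s k j - vert n s l j)^2 = s^2 := by
  obtain ⟨hσ2, hσgt⟩ := sqrt_n_prop hn
  set σ := Real.sqrt n with hσ
  set aa := s / Real.sqrt 2 with haadef
  have hσ0 : σ ≠ 0 := by nlinarith
  have hσ1 : σ^2 - 1 ≠ 0 := by nlinarith
  have hn0 : 0 < n := by omega
  have h3 := haa s
  rw [← haadef] at h3
  have hvalne : k.1 ≠ l.1 := fun hc => hkl (Fin.ext hc)
  -- helper for the mixed case
  have main : ∀ k l : Fin n, k.1 = 0 → l.1 ≠ 0 →
      ∑ j, (vert n s k j - vert n s l j)^2 = s^2 := by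
    intro k l hk hl
    have hf : ∀ j : Fin n, (vert n s k j - vert n s l j)^2
        = (if j.1 = 0 then (0:ℝ) else if j.1 = l.1 then (-aa/σ - (aa + vertb n s))^2
            else (-aa/σ - vertb n s)^2) := by
      intro j
      simp only [vert, hk, hl, reduceIte, ← haadef, ← hσ]
      split_ifs <;> first | ring1 | omega
    rw [Finset.sum_congr rfl fun j _ => hf j, sum_ite_two' 0 l.1 hn0 l.isLt (fun hc => hl hc.symm)]
    have hb : vertb n s = -aa*(σ-1)/((σ^2-1)*σ) := by
      rw [vertb, ← haadef, ← hσ, hσ2]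
    rw [hb, ← hσ2]
    have h2 : (-aa/σ - (aa + -aa*(σ-1)/((σ^2-1)*σ)))^2 + (σ^2-2)*(-aa/σ - -aa*(σ-1)/((σ^2-1)*σ))^2
        = aa^2 * 2 := by
      field_simp
      ring
    calc 0 + (-aa/σ - (aa + -aa*(σ-1)/((σ^2-1)*σ)))^2 + (σ^2-2)*(-aa/σ - -aa*(σ-1)/((σ^2-1)*σ))^2
        = aa^2 * 2 := by rw [← h2]; ring
      _ = s^2 := by rw [h3]; ring
  by_cases hk : k.1 = 0
  · have hl : l.1 ≠ 0 := fun hc => hvalne (hk.trans hc.symm)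
    exact main k l hk hl
  · by_cases hl : l.1 = 0
    · have := main l k hl hk
      rw [← this]
      exact Finset.sum_congr rfl fun j _ => by ring
    · have hf : ∀ j : Fin n, (vert n s k j - vert n s l j)^2
          = (if j.1 = 0 then (0:ℝ) else if j.1 = k.1 then aa^2 else if j.1 = l.1 then aa^2 else 0) := by
        intro j
        simp only [vert, hk, hl, reduceIte, ← haadef, ← hσ]
        split_ifs <;> first | ring1 | omega
      rw [Finset.sum_congr rfl fun j _ => hf j,
        sum_ite_three' 0 k.1 l.1 hn0 k.isLt l.isLt (fun hc => hk hc.symm) (fun hc => hl hc.symm) hvalne]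
      rw [h3]
      ring

end VertProps
end Tysz2

open Finset

namespace Tysz3

lemma exists_frame {n : ℕ} (hn : 3 ≤ n) (x y : EuclideanSpace ℝ (Fin n)) (hxy : x ≠ y) :
    ∃ Φ : (Fin n → ℝ) → EuclideanSpace ℝ (Fin n),
      Φ (fun _ => 0) = x ∧
      Φ (fun j => if j.1 = 0 then -dist x y else 0) = y ∧
      (∀ c c' : Fin n → ℝ, (dist (Φ c) (Φ c'))^2 = ∑ j, (c j - c' j)^2) := by
  have h0n : 0 < n := by omega
  set i0 : Fin n := ⟨0, h0n⟩ with hi0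
  have hnorm : ‖x - y‖ ≠ 0 := by
    simp only [ne_eq, norm_eq_zero, sub_eq_zero]
    exact hxy
  set v0 : EuclideanSpace ℝ (Fin n) := ‖x - y‖⁻¹ • (x - y) with hv0
  have hcard : Module.finrank ℝ (EuclideanSpace ℝ (Fin n)) = Fintype.card (Fin n) := by
    simp [finrank_euclideanSpace_fin]
  have hON : Orthonormal ℝ (Set.restrict {i0} (fun _ : Fin n => v0)) := by
    constructor
    · intro i
      show ‖v0‖ = 1
      rw [hv0, norm_smul, Real.norm_eq_abs, abs_inv, abs_norm]
      field_simp
    · intro i j hij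
      exfalso
      apply hij
      have hi := i.2
      have hj := j.2
      simp only [Set.mem_singleton_iff] at hi hj
      exact Subtype.ext (hi.trans hj.symm)
  obtain ⟨b, hb⟩ := hON.exists_orthonormalBasis_extension_of_card_eq hcard
  have hb0 : b i0 = v0 := hb i0 rfl
  refine ⟨fun c => x + ∑ j, c j • b j, ?_, ?_, ?_⟩
  · simp
  · show x + ∑ j : Fin n, (if (j:ℕ) = 0 then -dist x y else 0) • b j = y
    have hcoef : ∀ j : Fin n, (if (j:ℕ) = 0 then -dist x y else 0) • b j
        = (if j = i0 then (-dist x y) • b i0 else 0) := by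
      intro j
      by_cases hj : j = i0
      · subst hj; simp [i0]
      · rw [if_neg hj, if_neg (fun hc => hj (Fin.ext hc)), zero_smul]
    rw [Finset.sum_congr rfl fun j _ => hcoef j, Finset.sum_ite_eq' Finset.univ,
      if_pos (Finset.mem_univ _), hb0, hv0, smul_smul, dist_eq_norm]
    have : -‖x - y‖ * ‖x - y‖⁻¹ = -1 := by field_simp
    rw [this]
    simp
  · intro c c'
    show (dist (x + ∑ j : Fin n, c j • b j) (x + ∑ j : Fin n, c' j • b j))^2 = ∑ j : Fin n, (c j - c' j)^2
    have hdiff : (x + ∑ j, c j • b j) - (x + ∑ j, c' j • b j) = ∑ j, (c j - c' j) • b j := by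
      rw [add_sub_add_left_eq_sub, ← Finset.sum_sub_distrib]
      exact Finset.sum_congr rfl fun j _ => (sub_smul _ _ _).symm
    rw [dist_eq_norm, hdiff]
    have hrepr : b.repr (∑ j, (c j - c' j) • b j) = fun i => c i - c' i := by
      rw [map_sum]
      funext i
      have h1 : ∀ j, b.repr ((c j - c' j) • b j) = (c j - c' j) • EuclideanSpace.single j (1:ℝ) := by
        intro j
        rw [_root_.map_smul, OrthonormalBasis.repr_self]
      rw [Finset.sum_congr rfl fun j _ => h1 j]
      have h2 : (∑ j, (c j - c' j) • EuclideanSpace.single j (1:ℝ)) i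
          = ∑ j, (c j - c' j) * (if i = j then (1:ℝ) else 0) := by
        rw [WithLp.ofLp_sum, Finset.sum_apply]
        refine Finset.sum_congr rfl fun j _ => ?_
        rw [PiLp.smul_apply, EuclideanSpace.single_apply, smul_eq_mul]
      rw [h2]
      simp
    rw [← b.repr.norm_map, EuclideanSpace.norm_eq, hrepr]
    rw [Real.sq_sqrt (by positivity)]
    refine Finset.sum_congr rfl fun j _ => ?_
    rw [Real.norm_eq_abs, sq_abs]

end Tysz3

namespace TyszMain
open Matrix Finset Tysz Tysz2 Tysz3

variable {n : ℕ}

abbrev E (n : ℕ) := EuclideanSpace ℝ (Fin n)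

lemma upo_mono {S T : Set (E n)} (h : S ⊆ T) {f} (hf : UnitPreservingOn n T f) :
    UnitPreservingOn n S f := fun a ha b hb hab => hf a (h ha) b (h hb) hab

def axisPt (n : ℕ) (t : ℝ) : Fin n → ℝ := fun j => if j.1 = 0 then t else 0

noncomputable def qcoord (n : ℕ) (h s : ℝ) : Fin n → Fin n → ℝ :=
  fun k j => if j.1 = 0 then -h else vert n s k j

def zcoord (n : ℕ) (Z0 Z1 : ℝ) : Fin n → ℝ :=
  fun j => if j.1 = 0 then Z0 else if j.1 = 1 then Z1 else 0

lemma sum_axis_axis (hn : 3 ≤ n) (t t' : ℝ) :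
    ∑ j : Fin n, (axisPt n t j - axisPt n t' j)^2 = (t - t')^2 := by
  have h0 : 0 < n := by omega
  have hf : ∀ j : Fin n, (axisPt n t j - axisPt n t' j)^2 = (if j.1 = 0 then (t-t')^2 else 0) := by
    intro j; simp only [axisPt]; split_ifs <;> ring
  rw [Finset.sum_congr rfl fun j _ => hf j, sum_ite_one' 0 h0]; ring

lemma sum_axis_q (hn : 3 ≤ n) (t h s : ℝ) (k : Fin n) :
    ∑ j : Fin n, (axisPt n t j - qcoord n h s k j)^2
      = (t + h)^2 + s^2*((n:ℝ)-1)/(2*(n:ℝ)) := by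
  have h0 : 0 < n := by omega
  have hf : ∀ j : Fin n, (axisPt n t j - qcoord n h s k j)^2
      = (if j.1 = 0 then (t+h)^2 else 0) + (vert n s k j)^2 := by
    intro j
    simp only [axisPt, qcoord, vert]
    split_ifs <;> ring
  rw [Finset.sum_congr rfl fun j _ => hf j, Finset.sum_add_distrib, sum_ite_one' 0 h0,
    vert_norm hn s k]
  ring

lemma sum_q_q (hn : 3 ≤ n) (h s : ℝ) (k l : Fin n) (hkl : k ≠ l) :
    ∑ j : Fin n, (qcoord n h s k j - qcoord n h s l j)^2 = s^2 := by
  have hf : ∀ j : Fin n, (qcoord n h s k j - qcoord n h s l j)^2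
      = (vert n s k j - vert n s l j)^2 := by
    intro j
    simp only [qcoord, vert]
    split_ifs <;> ring
  rw [Finset.sum_congr rfl fun j _ => hf j, vert_dist hn s k l hkl]

lemma sum_z_axis (hn : 3 ≤ n) (Z0 Z1 t : ℝ) :
    ∑ j : Fin n, (zcoord n Z0 Z1 j - axisPt n t j)^2 = (Z0 - t)^2 + Z1^2 := by
  have h0 : 0 < n := by omega
  have h1 : 1 < n := by omega
  have hf : ∀ j : Fin n, (zcoord n Z0 Z1 j - axisPt n t j)^2
      = (if j.1 = 0 then (Z0-t)^2 else if j.1 = 1 then Z1^2 else 0) := by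
    intro j; simp only [zcoord, axisPt]; split_ifs <;> first | ring1 | omega
  rw [Finset.sum_congr rfl fun j _ => hf j, sum_ite_two' 0 1 h0 h1 (by omega)]
  ring

lemma frame_dist {Φ : (Fin n → ℝ) → E n}
    (hΦd : ∀ c c', (dist (Φ c) (Φ c'))^2 = ∑ j : Fin n, (c j - c' j)^2)
    (c c' : Fin n → ℝ) (r : ℝ) (hr : 0 ≤ r)
    (hsum : ∑ j : Fin n, (c j - c' j)^2 = r^2) :
    dist (Φ c) (Φ c') = r := by
  have h1 := hΦd c c'
  rw [hsum] at h1
  have h2 : dist (Φ c) (Φ c') = Real.sqrt (r^2) := by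
    rw [← h1, Real.sqrt_sq dist_nonneg]
  rw [h2, Real.sqrt_sq hr]

lemma phi_decomp (n : ℕ) (Z Z' C : Fin n → ℂ) :
    phi n Z Z' = (Z - C) ⬝ᵥ (Z - C) + (Z' - C) ⬝ᵥ (Z' - C) - 2*((Z - C) ⬝ᵥ (Z' - C)) := by
  rw [phi_expand]
  simp only [sub_dotProduct, dotProduct_sub]
  rw [dotProduct_comm C Z, dotProduct_comm C Z']
  ring

lemma cast_alpha (hn : 3 ≤ n) (d : ℝ) :
    ((Real.sqrt (2+2/(n:ℝ)) * d : ℝ) : ℂ)^2 = (2+2/(n:ℂ))*(d:ℂ)^2 := by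
  have hpos : (0:ℝ) ≤ 2+2/(n:ℝ) := by positivity
  rw [Complex.ofReal_mul, mul_pow, ← Complex.ofReal_pow, Real.sq_sqrt hpos]
  push_cast
  ring

lemma memD_alpha (hn : 3 ≤ n) {d : ℝ} (hd : MemD n d) :
    MemD n (Real.sqrt (2 + 2/(n:ℝ)) * d) := by
  classical
  obtain ⟨hdpos, hdforce⟩ := hd
  have hnR : (3:ℝ) ≤ (n:ℝ) := by exact_mod_cast hn
  have hn0 : (n:ℝ) ≠ 0 := by positivity
  have hα2 : (Real.sqrt (2+2/(n:ℝ)))^2 = 2+2/(n:ℝ) := Real.sq_sqrt (by positivity)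
  have hαpos : 0 < Real.sqrt (2+2/(n:ℝ)) := Real.sqrt_pos.2 (by positivity)
  set α := Real.sqrt (2+2/(n:ℝ)) with hαdef
  refine ⟨by positivity, fun x y hxy => ?_⟩
  have hxyne : x ≠ y := by
    intro h
    rw [h, dist_self] at hxy
    nlinarith
  obtain ⟨Φ, hΦx, hΦy, hΦd⟩ := exists_frame hn x y hxyne
  rw [hxy] at hΦy
  have hy' : Φ (axisPt n (-(α*d))) = y := hΦy
  have haxis0 : (axisPt n 0) = (fun _ : Fin n => (0:ℝ)) := by
    funext j; simp [axisPt]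
  have hx' : Φ (axisPt n 0) = x := by rw [haxis0, hΦx]
  -- the base simplex
  set q : Fin n → E n := fun k => Φ (qcoord n (α*d/2) d k) with hqdef
  -- κ and λ for the z point
  set κ : ℝ := (3*(n:ℝ)+4)/(4*(n:ℝ)+4) with hκdef
  have hκ01 : 0 ≤ κ ∧ κ ≤ 1 := by
    constructor
    · positivity
    · rw [hκdef, div_le_one (by positivity)]; linarith
  set lam : ℝ := Real.sqrt (1 - κ^2) with hlamdef
  have hlam2 : lam^2 = 1 - κ^2 := Real.sq_sqrt (by nlinarith [hκ01.1, hκ01.2])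
  set z : E n := Φ (zcoord n (α*d*(κ-1)) (α*d*lam)) with hzdef
  -- distances in system 1
  have hapex : ∀ t : ℝ, (t + α*d/2)^2 = α^2*(d^2/4) →
      (t + α*d/2)^2 + d^2*((n:ℝ)-1)/(2*(n:ℝ)) = d^2 := by
    intro t ht
    rw [ht, hα2]
    field_simp
    ring
  have hxq : ∀ k, dist x (q k) = d := by
    intro k
    rw [← hx']
    exact frame_dist hΦd _ _ d hdpos.le
      (by rw [sum_axis_q hn]; exact hapex 0 (by ring))
  have hyq : ∀ k, dist y (q k) = d := by
    intro k
    rw [← hy']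
    exact frame_dist hΦd _ _ d hdpos.le
      (by rw [sum_axis_q hn]; exact hapex (-(α*d)) (by ring))
  have hqq : ∀ k l, k ≠ l → dist (q k) (q l) = d := by
    intro k l hkl
    exact frame_dist hΦd _ _ d hdpos.le (by rw [sum_q_q hn _ _ _ _ hkl])
  have hzx : dist z x = d := by
    rw [← hx']
    refine frame_dist hΦd _ _ d hdpos.le ?_
    rw [sum_z_axis hn]
    have h1 : (α*d*(κ-1) - 0)^2 + (α*d*lam)^2 = α^2*(d^2*(2-2*κ)) := by
      linear_combination (α*d)^2 * hlam2
    rw [h1, hα2, hκdef]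
    field_simp
    ring
  have hzy : dist z y = α*d := by
    rw [← hy']
    refine frame_dist hΦd _ _ (α*d) (by positivity) ?_
    rw [sum_z_axis hn]
    linear_combination (α*d)^2 * hlam2
  have hzyne : z ≠ y := by
    intro h
    rw [h, dist_self] at hzy
    nlinarith
  obtain ⟨Ψ, hΨz, hΨy, hΨd⟩ := exists_frame hn z y hzyne
  rw [hzy] at hΨy
  have hy'' : Ψ (axisPt n (-(α*d))) = y := hΨy
  have hz' : Ψ (axisPt n 0) = z := by rw [haxis0, hΨz]
  set q' : Fin n → E n := fun k => Ψ (qcoord n (α*d/2) d k) with hq'def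
  have hzq' : ∀ k, dist z (q' k) = d := by
    intro k
    rw [← hz']
    exact frame_dist hΨd _ _ d hdpos.le
      (by rw [sum_axis_q hn]; exact hapex 0 (by ring))
  have hyq' : ∀ k, dist y (q' k) = d := by
    intro k
    rw [← hy'']
    exact frame_dist hΨd _ _ d hdpos.le
      (by rw [sum_axis_q hn]; exact hapex (-(α*d)) (by ring))
  have hq'q' : ∀ k l, k ≠ l → dist (q' k) (q' l) = d := by
    intro k l hkl
    exact frame_dist hΨd _ _ d hdpos.le (by rw [sum_q_q hn _ _ _ _ hkl])
  -- witness sets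
  set W1 : Fin n → Finset (E n) := fun k => (hdforce x (q k) (hxq k)).choose with hW1def
  set W2 : Fin n → Finset (E n) := fun k => (hdforce y (q k) (hyq k)).choose with hW2def
  set W3 : Fin n × Fin n → Finset (E n) := fun p =>
    if hp : p.1 = p.2 then ∅ else (hdforce (q p.1) (q p.2) (hqq p.1 p.2 hp)).choose with hW3def
  set W4 : Finset (E n) := (hdforce z x hzx).choose with hW4def
  set W5 : Fin n → Finset (E n) := fun k => (hdforce z (q' k) (hzq' k)).choose with hW5def
  set W6 : Fin n → Finset (E n) := fun k => (hdforce y (q' k) (hyq' k)).choose with hW6def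
  set W7 : Fin n × Fin n → Finset (E n) := fun p =>
    if hp : p.1 = p.2 then ∅ else (hdforce (q' p.1) (q' p.2) (hq'q' p.1 p.2 hp)).choose with hW7def
  set T1 := Finset.univ.biUnion W1 with hT1
  set T2 := Finset.univ.biUnion W2 with hT2
  set T3 := Finset.univ.biUnion W3 with hT3
  set T5 := Finset.univ.biUnion W5 with hT5
  set T6 := Finset.univ.biUnion W6 with hT6
  set T7 := Finset.univ.biUnion W7 with hT7
  set S : Finset (E n) := T1 ∪ (T2 ∪ (T3 ∪ (W4 ∪ (T5 ∪ (T6 ∪ T7))))) with hSdef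
  have hsub1 : T1 ⊆ S := Finset.subset_union_left
  have hsubR1 : (T2 ∪ (T3 ∪ (W4 ∪ (T5 ∪ (T6 ∪ T7))))) ⊆ S := Finset.subset_union_right
  have hsub2 : T2 ⊆ S := Finset.Subset.trans Finset.subset_union_left hsubR1
  have hsubR2 : (T3 ∪ (W4 ∪ (T5 ∪ (T6 ∪ T7)))) ⊆ S :=
    Finset.Subset.trans Finset.subset_union_right hsubR1
  have hsub3 : T3 ⊆ S := Finset.Subset.trans Finset.subset_union_left hsubR2
  have hsubR3 : (W4 ∪ (T5 ∪ (T6 ∪ T7))) ⊆ S :=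
    Finset.Subset.trans Finset.subset_union_right hsubR2
  have hsub4 : W4 ⊆ S := Finset.Subset.trans Finset.subset_union_left hsubR3
  have hsubR4 : (T5 ∪ (T6 ∪ T7)) ⊆ S := Finset.Subset.trans Finset.subset_union_right hsubR3
  have hsub5 : T5 ⊆ S := Finset.Subset.trans Finset.subset_union_left hsubR4
  have hsubR5 : (T6 ∪ T7) ⊆ S := Finset.Subset.trans Finset.subset_union_right hsubR4
  have hsub6 : T6 ⊆ S := Finset.Subset.trans Finset.subset_union_left hsubR5
  have hsub7 : T7 ⊆ S := Finset.Subset.trans Finset.subset_union_right hsubR5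
  have hn0' : 0 < n := by omega
  refine ⟨S, ?_, ?_, ?_⟩
  · exact hsub1 (Finset.mem_biUnion.2 ⟨⟨0, hn0'⟩, Finset.mem_univ _,
      (hdforce x (q ⟨0, hn0'⟩) (hxq ⟨0, hn0'⟩)).choose_spec.1⟩)
  · exact hsub2 (Finset.mem_biUnion.2 ⟨⟨0, hn0'⟩, Finset.mem_univ _,
      (hdforce y (q ⟨0, hn0'⟩) (hyq ⟨0, hn0'⟩)).choose_spec.1⟩)
  intro f hf
  -- forced phi values
  have force1 : ∀ k, phi n (f x) (f (q k)) = (d:ℂ)^2 := by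
    intro k
    refine (hdforce x (q k) (hxq k)).choose_spec.2.2 f (upo_mono ?_ hf)
    exact Finset.coe_subset.2
      (Finset.Subset.trans (Finset.subset_biUnion_of_mem W1 (Finset.mem_univ k)) hsub1)
  have force2 : ∀ k, phi n (f y) (f (q k)) = (d:ℂ)^2 := by
    intro k
    refine (hdforce y (q k) (hyq k)).choose_spec.2.2 f (upo_mono ?_ hf)
    exact Finset.coe_subset.2
      (Finset.Subset.trans (Finset.subset_biUnion_of_mem W2 (Finset.mem_univ k)) hsub2)
  have force3 : ∀ k l, k ≠ l → phi n (f (q k)) (f (q l)) = ((d:ℝ):ℂ)^2 := by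
    intro k l hkl
    have hW3kl : W3 (k,l) = (hdforce (q k) (q l) (hqq k l hkl)).choose := by
      rw [hW3def]; exact dif_neg hkl
    refine (hdforce (q k) (q l) (hqq k l hkl)).choose_spec.2.2 f (upo_mono ?_ hf)
    rw [← hW3kl]
    exact Finset.coe_subset.2
      (Finset.Subset.trans (Finset.subset_biUnion_of_mem W3 (Finset.mem_univ (k,l))) hsub3)
  have force4 : phi n (f z) (f x) = (d:ℂ)^2 := by
    refine (hdforce z x hzx).choose_spec.2.2 f (upo_mono ?_ hf)
    exact Finset.coe_subset.2 hsub4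
  have force5 : ∀ k, phi n (f z) (f (q' k)) = (d:ℂ)^2 := by
    intro k
    refine (hdforce z (q' k) (hzq' k)).choose_spec.2.2 f (upo_mono ?_ hf)
    exact Finset.coe_subset.2
      (Finset.Subset.trans (Finset.subset_biUnion_of_mem W5 (Finset.mem_univ k)) hsub5)
  have force6 : ∀ k, phi n (f y) (f (q' k)) = (d:ℂ)^2 := by
    intro k
    refine (hdforce y (q' k) (hyq' k)).choose_spec.2.2 f (upo_mono ?_ hf)
    exact Finset.coe_subset.2
      (Finset.Subset.trans (Finset.subset_biUnion_of_mem W6 (Finset.mem_univ k)) hsub6)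
  have force7 : ∀ k l, k ≠ l → phi n (f (q' k)) (f (q' l)) = ((d:ℝ):ℂ)^2 := by
    intro k l hkl
    have hW7kl : W7 (k,l) = (hdforce (q' k) (q' l) (hq'q' k l hkl)).choose := by
      rw [hW7def]; exact dif_neg hkl
    refine (hdforce (q' k) (q' l) (hq'q' k l hkl)).choose_spec.2.2 f (upo_mono ?_ hf)
    rw [← hW7kl]
    exact Finset.coe_subset.2
      (Finset.Subset.trans (Finset.subset_biUnion_of_mem W7 (Finset.mem_univ (k,l))) hsub7)
  -- complex constants
  have hnC : (n:ℂ) ≠ 0 := Nat.cast_ne_zero.2 (by omega)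
  have hdC : (d:ℂ) ≠ 0 := Complex.ofReal_ne_zero.2 (ne_of_gt hdpos)
  have hd2C : (d:ℂ)^2 ≠ 0 := pow_ne_zero _ hdC
  have hn1C : (n:ℂ)+1 ≠ 0 := by
    have : ((n+1:ℕ):ℂ) ≠ 0 := Nat.cast_ne_zero.2 (by omega)
    push_cast at this
    exact this
  set hsqC : ℂ := (d:ℂ)^2 - ((n:ℂ)-1) * ((d:ℝ):ℂ)^2 / (2*(n:ℂ)) with hsqCdef
  have hsqval : hsqC = ((n:ℂ)+1)*(d:ℂ)^2/(2*(n:ℂ)) := by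
    rw [hsqCdef]
    field_simp
    ring
  have hsqne : hsqC ≠ 0 := by
    rw [hsqval]
    exact div_ne_zero (mul_ne_zero hn1C hd2C) (by simp [hnC])
  -- system 1 structure
  obtain ⟨C1, hA1, hB1⟩ := simplex_key hn (ne_of_gt hdpos) (fun k => f (q k)) force3
  obtain ⟨hxW, hxQ⟩ := hA1 (f x) ((d:ℂ)^2) force1
  obtain ⟨hyW, hyQ⟩ := hA1 (f y) ((d:ℂ)^2) force2
  rw [← hsqCdef] at hxQ hyQ
  -- system 2 structure
  obtain ⟨C2, hA2, hB2⟩ := simplex_key hn (ne_of_gt hdpos) (fun k => f (q' k)) force7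
  obtain ⟨hzW, hzQ⟩ := hA2 (f z) ((d:ℂ)^2) force5
  obtain ⟨hy2W, hy2Q⟩ := hA2 (f y) ((d:ℂ)^2) force6
  rw [← hsqCdef] at hzQ hy2Q
  -- dichotomy in system 1
  have hyne : f y - C1 ≠ 0 := by
    intro h
    rw [h] at hyQ
    simp at hyQ
    exact hsqne hyQ.symm
  have hprop := hB1 (f x - C1) (f y - C1) hxW hyW hyne
  have hT2 : ((f x - C1) ⬝ᵥ (f y - C1))^2 = hsqC^2 := by
    have h1 := congrArg (fun w => w ⬝ᵥ (f x - C1)) hprop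
    simp only [smul_dotProduct, smul_eq_mul] at h1
    rw [hyQ, hxQ, dotProduct_comm (f y - C1) (f x - C1)] at h1
    linear_combination -h1
  have hphixy : phi n (f x) (f y)
      = 2*hsqC - 2*((f x - C1) ⬝ᵥ (f y - C1)) := by
    rw [phi_decomp n (f x) (f y) C1, hxQ, hyQ]
    ring
  -- dichotomy in system 2
  have hy2ne : f y - C2 ≠ 0 := by
    intro h
    rw [h] at hy2Q
    simp at hy2Q
    exact hsqne hy2Q.symm
  have hprop2 := hB2 (f z - C2) (f y - C2) hzW hy2W hy2ne
  have hT2' : ((f z - C2) ⬝ᵥ (f y - C2))^2 = hsqC^2 := by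
    have h1 := congrArg (fun w => w ⬝ᵥ (f z - C2)) hprop2
    simp only [smul_dotProduct, smul_eq_mul] at h1
    rw [hy2Q, hzQ, dotProduct_comm (f y - C2) (f z - C2)] at h1
    linear_combination -h1
  have hphizy : phi n (f z) (f y)
      = 2*hsqC - 2*((f z - C2) ⬝ᵥ (f y - C2)) := by
    rw [phi_decomp n (f z) (f y) C2, hzQ, hy2Q]
    ring
  -- case analysis on T
  set T : ℂ := (f x - C1) ⬝ᵥ (f y - C1) with hTdef
  have hTcases : (T - hsqC) * (T + hsqC) = 0 := by
    linear_combination hT2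
  rcases mul_eq_zero.1 hTcases with hTc | hTc
  · -- T = hsqC : collapse, contradiction
    exfalso
    have hTeq : T = hsqC := by linear_combination hTc
    have hcollapse : f x = f y := by
      have h2 : hsqC • (f x - C1) = hsqC • (f y - C1) := by
        calc hsqC • (f x - C1) = ((f y - C1) ⬝ᵥ (f y - C1)) • (f x - C1) := by rw [hyQ]
          _ = ((f x - C1) ⬝ᵥ (f y - C1)) • (f y - C1) := hprop
          _ = hsqC • (f y - C1) := by rw [← hTdef, hTeq]
      have h3 := smul_right_injective (Fin n → ℂ) hsqne h2
      have h4 := congrArg (fun w => w + C1) h3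
      simpa using h4
    have hzyval : phi n (f z) (f y) = (d:ℂ)^2 := by
      rw [← hcollapse]
      exact force4
    have hT2cases : ((f z - C2) ⬝ᵥ (f y - C2) - hsqC) * ((f z - C2) ⬝ᵥ (f y - C2) + hsqC) = 0 := by
      linear_combination hT2'
    rcases mul_eq_zero.1 hT2cases with hc | hc
    · -- phi z y = 0 : contradiction with d ≠ 0
      have : phi n (f z) (f y) = 0 := by
        rw [hphizy]
        linear_combination -2*hc
      rw [hzyval] at this
      exact hd2C this
    · -- phi z y = 4 hsqC : contradiction
      have h5 : phi n (f z) (f y) = 4*hsqC := by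
        rw [hphizy]
        linear_combination -2*hc
      rw [hzyval, hsqval] at h5
      have hval : (4:ℂ)*(((n:ℂ)+1)*(d:ℂ)^2/(2*(n:ℂ))) = (2*((n:ℂ)+1)/(n:ℂ))*(d:ℂ)^2 := by
        field_simp
        ring
      rw [hval] at h5
      have h7 : (1:ℂ) = 2*((n:ℂ)+1)/(n:ℂ) :=
        mul_right_cancel₀ hd2C (by rw [one_mul]; exact h5)
      have h8 : (n:ℂ) = 2*((n:ℂ)+1) := by
        have h9 := congrArg (fun w => w * (n:ℂ)) h7
        rw [one_mul, div_mul_cancel₀ _ hnC] at h9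
        exact h9
      have h10 : (n:ℕ) = 2*(n+1) := by exact_mod_cast h8
      omega
  · -- T = -hsqC : the desired value
    have hTeq : T = -hsqC := by linear_combination hTc
    rw [hphixy, hTeq, hsqval, hαdef, cast_alpha hn d]
    field_simp
    ring

lemma memD_beta (hn : 3 ≤ n) {d : ℝ} (hd : MemD n d)
    (hd2 : MemD n (Real.sqrt (2 + 2/(n:ℝ)) * d))
    (hd3 : MemD n ((2 + 2/(n:ℝ)) * d)) :
    MemD n (2/(n:ℝ) * d) := by
  classical
  obtain ⟨hdpos, F1⟩ := hd
  obtain ⟨-, F2⟩ := hd2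
  obtain ⟨-, F3⟩ := hd3
  have hnR : (3:ℝ) ≤ (n:ℝ) := by exact_mod_cast hn
  have hn0 : (n:ℝ) ≠ 0 := by positivity
  have hα2 : (Real.sqrt (2+2/(n:ℝ)))^2 = 2+2/(n:ℝ) := Real.sq_sqrt (by positivity)
  have hαpos : 0 < Real.sqrt (2+2/(n:ℝ)) := Real.sqrt_pos.2 (by positivity)
  set α := Real.sqrt (2+2/(n:ℝ)) with hαdef
  refine ⟨by positivity, fun x y hxy => ?_⟩
  have hxyne : x ≠ y := by
    intro h
    rw [h, dist_self] at hxy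
    have : (0:ℝ) < 2/(n:ℝ)*d := by positivity
    linarith
  obtain ⟨Φ, hΦx, hΦy, hΦd⟩ := exists_frame hn x y hxyne
  rw [hxy] at hΦy
  have hy' : Φ (axisPt n (-(2/(n:ℝ)*d))) = y := hΦy
  have haxis0 : (axisPt n 0) = (fun _ : Fin n => (0:ℝ)) := by
    funext j; simp [axisPt]
  have hx' : Φ (axisPt n 0) = x := by rw [haxis0, hΦx]
  set q : Fin n → E n := fun k => Φ (qcoord n (d/(n:ℝ)) (α*d) k) with hqdef
  set u : E n := Φ (axisPt n d) with hudef
  set u' : E n := Φ (axisPt n (-(2/(n:ℝ)*d) - d)) with hu'def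
  have hαd2 : (α*d)^2 = (2+2/(n:ℝ))*d^2 := by rw [mul_pow, hα2]
  -- distances
  have hxq : ∀ k, dist x (q k) = d := by
    intro k
    rw [← hx']
    refine frame_dist hΦd _ _ d hdpos.le ?_
    rw [sum_axis_q hn, hαd2]
    field_simp
    ring
  have hyq : ∀ k, dist y (q k) = d := by
    intro k
    rw [← hy']
    refine frame_dist hΦd _ _ d hdpos.le ?_
    rw [sum_axis_q hn, hαd2]
    field_simp
    ring
  have huq : ∀ k, dist u (q k) = α*d := by
    intro k
    rw [hudef]
    refine frame_dist hΦd _ _ (α*d) (by positivity) ?_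
    rw [sum_axis_q hn, hαd2]
    field_simp
    ring
  have hu'q : ∀ k, dist u' (q k) = α*d := by
    intro k
    rw [hu'def]
    refine frame_dist hΦd _ _ (α*d) (by positivity) ?_
    rw [sum_axis_q hn, hαd2]
    field_simp
    ring
  have hqq : ∀ k l, k ≠ l → dist (q k) (q l) = α*d := by
    intro k l hkl
    exact frame_dist hΦd _ _ (α*d) (by positivity) (by rw [sum_q_q hn _ _ _ _ hkl])
  have hxu : dist x u = d := by
    rw [← hx', hudef]
    refine frame_dist hΦd _ _ d hdpos.le ?_
    rw [sum_axis_axis hn]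
    ring
  have hyu' : dist y u' = d := by
    rw [← hy', hu'def]
    refine frame_dist hΦd _ _ d hdpos.le ?_
    rw [sum_axis_axis hn]
    ring
  have huu' : dist u u' = (2+2/(n:ℝ))*d := by
    rw [hudef, hu'def]
    refine frame_dist hΦd _ _ ((2+2/(n:ℝ))*d) (by positivity) ?_
    rw [sum_axis_axis hn]
    ring
  -- witness sets
  set V1 : Fin n → Finset (E n) := fun k => (F1 x (q k) (hxq k)).choose with hV1def
  set V2 : Fin n → Finset (E n) := fun k => (F1 y (q k) (hyq k)).choose with hV2def
  set V3 : Fin n × Fin n → Finset (E n) := fun p =>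
    if hp : p.1 = p.2 then ∅ else (F2 (q p.1) (q p.2) (hqq p.1 p.2 hp)).choose with hV3def
  set V4 : Fin n → Finset (E n) := fun k => (F2 u (q k) (huq k)).choose with hV4def
  set V5 : Fin n → Finset (E n) := fun k => (F2 u' (q k) (hu'q k)).choose with hV5def
  set V6 : Finset (E n) := (F1 x u hxu).choose with hV6def
  set V7 : Finset (E n) := (F1 y u' hyu').choose with hV7def
  set V8 : Finset (E n) := (F3 u u' huu').choose with hV8def
  set T1 := Finset.univ.biUnion V1 with hT1
  set T2 := Finset.univ.biUnion V2 with hT2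
  set T3 := Finset.univ.biUnion V3 with hT3
  set T4 := Finset.univ.biUnion V4 with hT4
  set T5 := Finset.univ.biUnion V5 with hT5
  set S : Finset (E n) := T1 ∪ (T2 ∪ (T3 ∪ (T4 ∪ (T5 ∪ (V6 ∪ (V7 ∪ V8)))))) with hSdef
  have hsub1 : T1 ⊆ S := Finset.subset_union_left
  have hsubR1 : (T2 ∪ (T3 ∪ (T4 ∪ (T5 ∪ (V6 ∪ (V7 ∪ V8)))))) ⊆ S := Finset.subset_union_right
  have hsub2 : T2 ⊆ S := Finset.Subset.trans Finset.subset_union_left hsubR1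
  have hsubR2 : (T3 ∪ (T4 ∪ (T5 ∪ (V6 ∪ (V7 ∪ V8))))) ⊆ S :=
    Finset.Subset.trans Finset.subset_union_right hsubR1
  have hsub3 : T3 ⊆ S := Finset.Subset.trans Finset.subset_union_left hsubR2
  have hsubR3 : (T4 ∪ (T5 ∪ (V6 ∪ (V7 ∪ V8)))) ⊆ S :=
    Finset.Subset.trans Finset.subset_union_right hsubR2
  have hsub4 : T4 ⊆ S := Finset.Subset.trans Finset.subset_union_left hsubR3
  have hsubR4 : (T5 ∪ (V6 ∪ (V7 ∪ V8))) ⊆ S :=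
    Finset.Subset.trans Finset.subset_union_right hsubR3
  have hsub5 : T5 ⊆ S := Finset.Subset.trans Finset.subset_union_left hsubR4
  have hsubR5 : (V6 ∪ (V7 ∪ V8)) ⊆ S := Finset.Subset.trans Finset.subset_union_right hsubR4
  have hsub6 : V6 ⊆ S := Finset.Subset.trans Finset.subset_union_left hsubR5
  have hsubR6 : (V7 ∪ V8) ⊆ S := Finset.Subset.trans Finset.subset_union_right hsubR5
  have hsub7 : V7 ⊆ S := Finset.Subset.trans Finset.subset_union_left hsubR6
  have hsub8 : V8 ⊆ S := Finset.Subset.trans Finset.subset_union_right hsubR6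
  have hn0' : 0 < n := by omega
  refine ⟨S, ?_, ?_, ?_⟩
  · exact hsub1 (Finset.mem_biUnion.2 ⟨⟨0, hn0'⟩, Finset.mem_univ _,
      (F1 x (q ⟨0, hn0'⟩) (hxq ⟨0, hn0'⟩)).choose_spec.1⟩)
  · exact hsub2 (Finset.mem_biUnion.2 ⟨⟨0, hn0'⟩, Finset.mem_univ _,
      (F1 y (q ⟨0, hn0'⟩) (hyq ⟨0, hn0'⟩)).choose_spec.1⟩)
  intro f hf
  -- forced values
  have fxq : ∀ k, phi n (f x) (f (q k)) = (d:ℂ)^2 := by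
    intro k
    refine (F1 x (q k) (hxq k)).choose_spec.2.2 f (upo_mono ?_ hf)
    exact Finset.coe_subset.2
      (Finset.Subset.trans (Finset.subset_biUnion_of_mem V1 (Finset.mem_univ k)) hsub1)
  have fyq : ∀ k, phi n (f y) (f (q k)) = (d:ℂ)^2 := by
    intro k
    refine (F1 y (q k) (hyq k)).choose_spec.2.2 f (upo_mono ?_ hf)
    exact Finset.coe_subset.2
      (Finset.Subset.trans (Finset.subset_biUnion_of_mem V2 (Finset.mem_univ k)) hsub2)
  have fqq : ∀ k l, k ≠ l → phi n (f (q k)) (f (q l)) = ((α*d : ℝ):ℂ)^2 := by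
    intro k l hkl
    have hV3kl : V3 (k,l) = (F2 (q k) (q l) (hqq k l hkl)).choose := by
      rw [hV3def]; exact dif_neg hkl
    refine (F2 (q k) (q l) (hqq k l hkl)).choose_spec.2.2 f (upo_mono ?_ hf)
    rw [← hV3kl]
    exact Finset.coe_subset.2
      (Finset.Subset.trans (Finset.subset_biUnion_of_mem V3 (Finset.mem_univ (k,l))) hsub3)
  have fuq : ∀ k, phi n (f u) (f (q k)) = ((α*d : ℝ):ℂ)^2 := by
    intro k
    refine (F2 u (q k) (huq k)).choose_spec.2.2 f (upo_mono ?_ hf)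
    exact Finset.coe_subset.2
      (Finset.Subset.trans (Finset.subset_biUnion_of_mem V4 (Finset.mem_univ k)) hsub4)
  have fu'q : ∀ k, phi n (f u') (f (q k)) = ((α*d : ℝ):ℂ)^2 := by
    intro k
    refine (F2 u' (q k) (hu'q k)).choose_spec.2.2 f (upo_mono ?_ hf)
    exact Finset.coe_subset.2
      (Finset.Subset.trans (Finset.subset_biUnion_of_mem V5 (Finset.mem_univ k)) hsub5)
  have fxu : phi n (f x) (f u) = (d:ℂ)^2 := by
    refine (F1 x u hxu).choose_spec.2.2 f (upo_mono ?_ hf)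
    exact Finset.coe_subset.2 hsub6
  have fyu' : phi n (f y) (f u') = (d:ℂ)^2 := by
    refine (F1 y u' hyu').choose_spec.2.2 f (upo_mono ?_ hf)
    exact Finset.coe_subset.2 hsub7
  have fuu' : phi n (f u) (f u') = (((2+2/(n:ℝ))*d : ℝ):ℂ)^2 := by
    refine (F3 u u' huu').choose_spec.2.2 f (upo_mono ?_ hf)
    exact Finset.coe_subset.2 hsub8
  -- complex constants
  have hnC : (n:ℂ) ≠ 0 := Nat.cast_ne_zero.2 (by omega)
  have hdC : (d:ℂ) ≠ 0 := Complex.ofReal_ne_zero.2 (ne_of_gt hdpos)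
  have hd2C : (d:ℂ)^2 ≠ 0 := pow_ne_zero _ hdC
  have hn1C : (n:ℂ)+1 ≠ 0 := by
    have : ((n+1:ℕ):ℂ) ≠ 0 := Nat.cast_ne_zero.2 (by omega)
    push_cast at this
    exact this
  have hcastα : ((α*d : ℝ):ℂ)^2 = (2+2/(n:ℂ))*(d:ℂ)^2 := by
    rw [hαdef]; exact cast_alpha hn d
  -- simplex structure
  have hαdne : α*d ≠ 0 := by positivity
  obtain ⟨C, hA, hB⟩ := simplex_key hn hαdne (fun k => f (q k)) fqq
  obtain ⟨hxW, hxQ⟩ := hA (f x) ((d:ℂ)^2) fxq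
  obtain ⟨hyW, hyQ⟩ := hA (f y) ((d:ℂ)^2) fyq
  obtain ⟨huW, huQ⟩ := hA (f u) (((α*d : ℝ):ℂ)^2) fuq
  obtain ⟨hu'W, hu'Q⟩ := hA (f u') (((α*d : ℝ):ℂ)^2) fu'q
  -- scaled Q values
  have hQx : (n:ℂ)^2 * ((f x - C) ⬝ᵥ (f x - C)) = (d:ℂ)^2 := by
    rw [hxQ, hcastα]
    field_simp
    ring
  have hQy : (n:ℂ)^2 * ((f y - C) ⬝ᵥ (f y - C)) = (d:ℂ)^2 := by
    rw [hyQ, hcastα]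
    field_simp
    ring
  have hQu : (n:ℂ)^2 * ((f u - C) ⬝ᵥ (f u - C)) = ((n:ℂ)+1)^2*(d:ℂ)^2 := by
    rw [huQ, hcastα]
    field_simp
    ring
  have hQu' : (n:ℂ)^2 * ((f u' - C) ⬝ᵥ (f u' - C)) = ((n:ℂ)+1)^2*(d:ℂ)^2 := by
    rw [hu'Q, hcastα]
    field_simp
    ring
  -- T notations
  set Txu : ℂ := (f x - C) ⬝ᵥ (f u - C) with hTxudef
  set Tyu' : ℂ := (f y - C) ⬝ᵥ (f u' - C) with hTyu'def
  set Tuu' : ℂ := (f u - C) ⬝ᵥ (f u' - C) with hTuu'def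
  set Tyu : ℂ := (f y - C) ⬝ᵥ (f u - C) with hTyudef
  set Txy : ℂ := (f x - C) ⬝ᵥ (f y - C) with hTxydef
  -- edge equations
  have e1 : ((f x - C) ⬝ᵥ (f x - C)) + ((f u - C) ⬝ᵥ (f u - C)) - 2*Txu = (d:ℂ)^2 := by
    rw [hTxudef, ← phi_decomp n (f x) (f u) C]
    exact fxu
  have e2 : ((f y - C) ⬝ᵥ (f y - C)) + ((f u' - C) ⬝ᵥ (f u' - C)) - 2*Tyu' = (d:ℂ)^2 := by
    rw [hTyu'def, ← phi_decomp n (f y) (f u') C]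
    exact fyu'
  have e3 : ((f u - C) ⬝ᵥ (f u - C)) + ((f u' - C) ⬝ᵥ (f u' - C)) - 2*Tuu'
      = (((2+2/(n:ℝ))*d : ℝ):ℂ)^2 := by
    rw [hTuu'def, ← phi_decomp n (f u) (f u') C]
    exact fuu'
  have hcast3 : (n:ℂ)^2 * ((((2+2/(n:ℝ))*d : ℝ):ℂ)^2) = (2*(n:ℂ)+2)^2*(d:ℂ)^2 := by
    push_cast
    field_simp
  -- scaled T values
  have hTxu : (n:ℂ)^2 * Txu = ((n:ℂ)+1)*(d:ℂ)^2 := by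
    linear_combination (hQx + hQu - (n:ℂ)^2*e1)/2
  have hTyu' : (n:ℂ)^2 * Tyu' = ((n:ℂ)+1)*(d:ℂ)^2 := by
    linear_combination (hQy + hQu' - (n:ℂ)^2*e2)/2
  have hTuu' : (n:ℂ)^2 * Tuu' = -(((n:ℂ)+1)^2*(d:ℂ)^2) := by
    linear_combination (hQu + hQu' - (n:ℂ)^2*e3 - hcast3)/2
  -- anchors are nonzero
  have hFne : ((n:ℂ)+1)^2*(d:ℂ)^2 ≠ 0 := mul_ne_zero (pow_ne_zero _ hn1C) hd2C
  have hune : f u - C ≠ 0 := by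
    intro h
    rw [h] at hQu
    rw [zero_dotProduct, mul_zero] at hQu
    exact hFne hQu.symm
  have hu'ne : f u' - C ≠ 0 := by
    intro h
    rw [h] at hQu'
    rw [zero_dotProduct, mul_zero] at hQu'
    exact hFne hQu'.symm
  -- proportionality relations
  have hprop1 := hB (f y - C) (f u' - C) hyW hu'W hu'ne
  have E2 : ((f u' - C) ⬝ᵥ (f u' - C)) * Tyu = Tyu' * Tuu' := by
    have h1 := congrArg (fun w => w ⬝ᵥ (f u - C)) hprop1
    simp only [smul_dotProduct, smul_eq_mul] at h1
    rw [← hTyudef, dotProduct_comm (f u' - C) (f u - C), ← hTuu'def, ← hTyu'def] at h1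
    exact h1
  have hprop2 := hB (f x - C) (f u - C) hxW huW hune
  have E1 : ((f u - C) ⬝ᵥ (f u - C)) * Txy = Txu * Tyu := by
    have h1 := congrArg (fun w => w ⬝ᵥ (f y - C)) hprop2
    simp only [smul_dotProduct, smul_eq_mul] at h1
    rw [← hTxydef, dotProduct_comm (f u - C) (f y - C), ← hTyudef, ← hTxudef] at h1
    exact h1
  -- solve for Tyu then Txy
  have keyTyu : (((n:ℂ)+1)^2*(d:ℂ)^2) * ((n:ℂ)^2*Tyu)
      = (((n:ℂ)+1)^2*(d:ℂ)^2) * (-(((n:ℂ)+1)*(d:ℂ)^2)) := by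
    linear_combination (-((n:ℂ)^2*Tyu))*hQu' + (n:ℂ)^4*E2 + ((n:ℂ)^2*Tuu')*hTyu'
      + (((n:ℂ)+1)*(d:ℂ)^2)*hTuu'
  have hTyuval : (n:ℂ)^2*Tyu = -(((n:ℂ)+1)*(d:ℂ)^2) := mul_left_cancel₀ hFne keyTyu
  have keyTxy : (((n:ℂ)+1)^2*(d:ℂ)^2) * ((n:ℂ)^2*Txy)
      = (((n:ℂ)+1)^2*(d:ℂ)^2) * (-((d:ℂ)^2)) := by
    linear_combination (-((n:ℂ)^2*Txy))*hQu + (n:ℂ)^4*E1 + ((n:ℂ)^2*Tyu)*hTxu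
      + (((n:ℂ)+1)*(d:ℂ)^2)*hTyuval
  have hTxyval : (n:ℂ)^2*Txy = -((d:ℂ)^2) := mul_left_cancel₀ hFne keyTxy
  -- final computation
  have hcastfin : (n:ℂ)^2 * (((2/(n:ℝ)*d : ℝ)):ℂ)^2 = 4*(d:ℂ)^2 := by
    push_cast
    field_simp
    ring
  have hfinal : (n:ℂ)^2 * (phi n (f x) (f y)) = (n:ℂ)^2 * ((((2/(n:ℝ)*d : ℝ)):ℂ)^2) := by
    rw [phi_decomp n (f x) (f y) C, ← hTxydef]
    linear_combination hQx + hQy - 2*hTxyval - hcastfin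
  exact mul_left_cancel₀ (pow_ne_zero 2 hnC) hfinal

lemma memD_one (n : ℕ) : MemD n 1 := by
  classical
  refine ⟨one_pos, fun x y hxy => ⟨{x, y}, by simp, by simp, fun f hf => ?_⟩⟩
  have h := hf x (by simp) y (by simp) hxy
  simpa using h

lemma memD_pow (n : ℕ) (hn : 3 ≤ n) :
    ∀ l k : ℕ, MemD n ((Real.sqrt (2+2/(n:ℝ)))^k * (2/(n:ℝ))^l) := by
  have hα2 : (Real.sqrt (2+2/(n:ℝ)))^2 = 2+2/(n:ℝ) := Real.sq_sqrt (by positivity)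
  intro l
  induction l with
  | zero =>
    intro k
    induction k with
    | zero => simpa using memD_one n
    | succ k ih =>
      have h := memD_alpha hn ih
      have heq : Real.sqrt (2+2/(n:ℝ)) * ((Real.sqrt (2+2/(n:ℝ)))^k * (2/(n:ℝ))^0)
          = (Real.sqrt (2+2/(n:ℝ)))^(k+1) * (2/(n:ℝ))^0 := by ring
      rwa [heq] at h
  | succ l ihl =>
    intro k
    have h2 : MemD n (Real.sqrt (2+2/(n:ℝ)) * ((Real.sqrt (2+2/(n:ℝ)))^k * (2/(n:ℝ))^l)) := by
      have h := ihl (k+1)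
      have heq : (Real.sqrt (2+2/(n:ℝ)))^(k+1) * (2/(n:ℝ))^l
          = Real.sqrt (2+2/(n:ℝ)) * ((Real.sqrt (2+2/(n:ℝ)))^k * (2/(n:ℝ))^l) := by ring
      rwa [heq] at h
    have h3 : MemD n ((2+2/(n:ℝ)) * ((Real.sqrt (2+2/(n:ℝ)))^k * (2/(n:ℝ))^l)) := by
      have h := ihl (k+2)
      have heq : (Real.sqrt (2+2/(n:ℝ)))^(k+2) * (2/(n:ℝ))^l
          = (2+2/(n:ℝ)) * ((Real.sqrt (2+2/(n:ℝ)))^k * (2/(n:ℝ))^l) := by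
        rw [pow_add, hα2]
        ring
      rwa [heq] at h
    have h := memD_beta hn (ihl k) h2 h3
    have heq : 2/(n:ℝ) * ((Real.sqrt (2+2/(n:ℝ)))^k * (2/(n:ℝ))^l)
        = (Real.sqrt (2+2/(n:ℝ)))^k * (2/(n:ℝ))^(l+1) := by ring
    rwa [heq] at h

end TyszMain

theorem stmt18 (n : ℕ) (hn : 3 ≤ n) (x y : EuclideanSpace ℝ (Fin n)) (k l : ℕ)
    (hxy : dist x y = (Real.sqrt (2 + 2 / n)) ^ k * (2 / (n : ℝ)) ^ l) :
    ∃ S : Finset (EuclideanSpace ℝ (Fin n)), x ∈ S ∧ y ∈ S ∧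
      ∀ f : EuclideanSpace ℝ (Fin n) → (Fin n → ℂ),
        UnitPreservingOn n (↑S) f →
          phi n (f x) (f y) = ((dist x y : ℝ) : ℂ) ^ 2 := by
  obtain ⟨S, hxS, hyS, hforce⟩ := (TyszMain.memD_pow n hn l k).2 x y hxy
  refine ⟨S, hxS, hyS, fun f hf => ?_⟩
  rw [hxy]
  exact hforce f hf
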